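/- For every integer L ≥ 1 and every real x, the transfer matrix t(x) is self-adjoint: its conjugate transpose equals itself. -/

import Mathlib

open Matrix

noncomputable section

/-- ω = e^{2πi/3}. -/
def ω : ℂ := Complex.exp (2 * Real.pi * Complex.I / 3)

/-- The 3×3 matrix X with rows (0,0,1),(1,0,0),(0,1,0). -/
def Xmat : Matrix (Fin 3) (Fin 3) ℂ := !![0,0,1; 1,0,0; 0,1,0]

/-- The 3×3 matrix Z = diag(1, ω, ω⁻¹). -/
def Zmat : Matrix (Fin 3) (Fin 3) ℂ := !![1,0,0; 0,ω,0; 0,0,ω⁻¹]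

/-- The 6×6 L-operator, indexed by pairs (i,a), i ∈ Fin 2 (auxiliary), a ∈ Fin 3,
with blocks L¹₁ = xX, L¹₂ = Z, L²₁ = Z⁻¹ = Z², L²₂ = xX⁻¹ = xX². -/
def Lop (x : ℂ) : Matrix (Fin 2 × Fin 3) (Fin 2 × Fin 3) ℂ :=
  Matrix.of fun p q =>
    match p.1, q.1 with
    | 0, 0 => x * Xmat p.2 q.2
    | 0, 1 => Zmat p.2 q.2
    | 1, 0 => (Zmat * Zmat) p.2 q.2
    | 1, 1 => x * (Xmat * Xmat) p.2 q.2

/-- The 2×2 matrix N_x(a,b) with (i,j) entry L(x)_{(i,a),(j,b)}. -/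
def Nmat (x : ℂ) (a b : Fin 3) : Matrix (Fin 2) (Fin 2) ℂ :=
  Matrix.of fun i j => Lop x (i, a) (j, b)

/-- The transfer matrix t(x): entry (α,β) is the trace of
N_x(α_L,β_L)·N_x(α_{L-1},β_{L-1})⋯N_x(α₁,β₁). -/
def tTransfer (L : ℕ) (x : ℂ) : Matrix (Fin L → Fin 3) (Fin L → Fin 3) ℂ :=
  Matrix.of fun α β =>
    Matrix.trace (((List.finRange L).reverse.map fun k => Nmat x (α k) (β k)).prod)


lemma ω_cube : ω * ω * ω = 1 := by
  have h : ω * ω * ω = Complex.exp (2 * Real.pi * Complex.I / 3 + (2 * Real.pi * Complex.I / 3 + 2 * Real.pi * Complex.I / 3)) := by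
    rw [Complex.exp_add, Complex.exp_add]; rw [ω]; ring
  rw [h, show (2 * (Real.pi:ℂ) * Complex.I / 3 + (2 * Real.pi * Complex.I / 3 + 2 * Real.pi * Complex.I / 3)) = 2 * Real.pi * Complex.I by ring, Complex.exp_two_pi_mul_I]

lemma ω_ne : ω ≠ 0 := Complex.exp_ne_zero _

lemma conj_ω : (starRingEnd ℂ) ω = ω⁻¹ := by
  rw [ω, ← Complex.exp_conj, ← Complex.exp_neg]
  congr 1
  simp [Complex.conj_I, map_div₀, map_ofNat]
  ring

def S2 : Matrix (Fin 2) (Fin 2) ℂ := !![0,1; 1,0]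

lemma S2_mul_S2 : S2 * S2 = 1 := by
  simp [S2, Matrix.mul_fin_two, Matrix.one_fin_two]

lemma conj_ω_inv : (starRingEnd ℂ) ω⁻¹ = ω := by
  rw [map_inv₀, conj_ω, inv_inv]

lemma ω_inv_eq : ω⁻¹ = ω * ω :=
  inv_eq_of_mul_eq_one_right (by rw [← mul_assoc]; exact ω_cube)

lemma key (x : ℝ) (a b : Fin 3) :
    (Nmat x b a).map (starRingEnd ℂ) = S2 * Nmat x a b * S2 := by
  have hωω : ω * ω = ω⁻¹ := ω_inv_eq.symm
  have hωiωi : ω⁻¹ * ω⁻¹ = ω := by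
    rw [ω_inv_eq]; linear_combination ω * ω_cube
  ext i j
  fin_cases i <;> fin_cases j <;>
    simp only [Nmat, Lop, S2, Matrix.map_apply, Matrix.mul_apply, Fin.sum_univ_two,
      Fin.sum_univ_three, Matrix.of_apply, Matrix.cons_val', Matrix.cons_val_zero,
      Matrix.cons_val_one, Matrix.head_cons, Matrix.empty_val', Matrix.cons_val_fin_one,
      Matrix.head_fin_const, zero_mul, one_mul, mul_zero, mul_one, add_zero, zero_add] <;>
    fin_cases a <;> fin_cases b <;>
    simp [Xmat, Zmat, Matrix.mul_apply, Fin.sum_univ_three, Matrix.vecHead, Matrix.vecTail,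
      conj_ω, conj_ω_inv, Complex.conj_ofReal, hωω, hωiωi]

lemma sandwich {ι : Type*} (l : List ι) (f : ι → Matrix (Fin 2) (Fin 2) ℂ) :
    (l.map fun k => S2 * f k * S2).prod = S2 * (l.map f).prod * S2 := by
  induction l with
  | nil => simp only [List.map_nil, List.prod_nil, mul_one, S2_mul_S2]
  | cons a t ih =>
      simp only [List.map_cons, List.prod_cons, ih]
      rw [show S2 * f a * S2 * (S2 * (t.map f).prod * S2)
            = S2 * f a * (S2 * S2) * (t.map f).prod * S2 by noncomm_ring,
        S2_mul_S2, mul_one]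
      noncomm_ring

/-- For every integer L ≥ 1 and every real x, the transfer matrix t(x)
is self-adjoint: its conjugate transpose equals itself. -/
theorem transfer_selfAdjoint (L : ℕ) (hL : 1 ≤ L) (x : ℝ) :
    (tTransfer L (x : ℂ))ᴴ = tTransfer L (x : ℂ) := by
  ext α β
  rw [Matrix.conjTranspose_apply]
  show star (tTransfer L (x : ℂ) β α) = tTransfer L (x : ℂ) α β
  unfold tTransfer
  simp only [Matrix.of_apply]
  rw [show (star (Matrix.trace (((List.finRange L).reverse.map fun k => Nmat x (β k) (α k)).prod)) : ℂ)
      = Matrix.trace ((((List.finRange L).reverse.map fun k => Nmat x (β k) (α k)).prod).map (starRingEnd ℂ)) by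
    simp [Matrix.trace, Matrix.diag, Matrix.map_apply, map_sum]]
  rw [show (((List.finRange L).reverse.map fun k => Nmat x (β k) (α k)).prod).map (starRingEnd ℂ)
      = ((List.finRange L).reverse.map fun k => (Nmat x (β k) (α k)).map (starRingEnd ℂ)).prod by
    simpa [List.map_map, Function.comp_def] using
      map_list_prod ((starRingEnd ℂ).mapMatrix)
        ((List.finRange L).reverse.map fun k => Nmat (x:ℂ) (β k) (α k))]
  simp only [fun k => key x (α k) (β k)]
  rw [sandwich]
  rw [Matrix.trace_mul_cycle, S2_mul_S2, one_mul]

end
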